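/- Let a, b be real numbers and let (τ,η) satisfy τ > 0 and 2τ − b²η² > 0. Set A(τ,η) = a²η² + τ², B(τ,η) = 2abη², C(τ,η) = 2τ − b²η², Δ(τ,η) = B² + 4AC, and define ϑ₁ = 2A/√Δ and ϑ₂ = B/√Δ. Then Δ > 0 on this region, ϑ₁ and ϑ₂ are differentiable, and (∂ϑ₁/∂τ)(∂ϑ₂/∂η) − (∂ϑ₁/∂η)(∂ϑ₂/∂τ) = 2abη(a²η² + τ²)/(2τ² − b²η²τ + 2a²η²)². In particular, this determinant is nonzero whenever abη ≠ 0. -/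

import Mathlib

private lemma hds_aux (f g : ℝ → ℝ) (x f' g' : ℝ)
    (hf : HasDerivAt f f' x) (hg : HasDerivAt g g' x) (hgx : 0 < g x) :
    HasDerivAt (fun t => f t / Real.sqrt (g t))
      ((2 * f' * g x - f x * g') / (2 * g x * Real.sqrt (g x))) x := by
  have hs : 0 < Real.sqrt (g x) := Real.sqrt_pos.2 hgx
  have hsq := (Real.hasDerivAt_sqrt hgx.ne').comp x hg
  have h := hf.div hsq hs.ne'
  refine h.congr_deriv (Eq.symm ?_)
  have hss : Real.sqrt (g x) * Real.sqrt (g x) = g x := Real.mul_self_sqrt hgx.le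
  show _ = (f' * Real.sqrt (g x) - f x * (1 / (2 * Real.sqrt (g x)) * g')) / Real.sqrt (g x) ^ 2
  rw [Real.sq_sqrt hgx.le]
  field_simp
  linear_combination (-(2*f')) * hss

theorem stmt_13 (a b : ℝ)
    (A B C Δ : ℝ → ℝ → ℝ) (θ1 θ2 : ℝ → ℝ → ℝ)
    (hA : ∀ τ η, A τ η = a^2*η^2 + τ^2)
    (hB : ∀ τ η, B τ η = 2*a*b*η^2)
    (hC : ∀ τ η, C τ η = 2*τ - b^2*η^2)
    (hΔ : ∀ τ η, Δ τ η = (B τ η)^2 + 4*(A τ η)*(C τ η))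
    (hθ1 : ∀ τ η, θ1 τ η = 2*(A τ η) / Real.sqrt (Δ τ η))
    (hθ2 : ∀ τ η, θ2 τ η = (B τ η) / Real.sqrt (Δ τ η)) :
    ∀ τ η : ℝ, 0 < τ → 0 < 2*τ - b^2*η^2 →
      0 < Δ τ η ∧
      DifferentiableAt ℝ (fun p : ℝ × ℝ => θ1 p.1 p.2) (τ, η) ∧
      DifferentiableAt ℝ (fun p : ℝ × ℝ => θ2 p.1 p.2) (τ, η) ∧
      deriv (fun t => θ1 t η) τ * deriv (fun e => θ2 τ e) η
        - deriv (fun e => θ1 τ e) η * deriv (fun t => θ2 t η) τ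
        = 2*a*b*η*(a^2*η^2 + τ^2) / (2*τ^2 - b^2*η^2*τ + 2*a^2*η^2)^2 ∧
      (a*b*η ≠ 0 →
        2*a*b*η*(a^2*η^2 + τ^2) / (2*τ^2 - b^2*η^2*τ + 2*a^2*η^2)^2 ≠ 0) := by
  intro τ η hτ hpos
  have hApos : (0:ℝ) < a^2*η^2 + τ^2 := by positivity
  have hDpos : (0:ℝ) < (2*a*b*η^2)^2 + 4*(a^2*η^2+τ^2)*(2*τ - b^2*η^2) := by
    have := mul_pos hApos hpos
    nlinarith [sq_nonneg (2*a*b*η^2)]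
  have hQ : (0:ℝ) < 2*τ^2 - b^2*η^2*τ + 2*a^2*η^2 := by
    nlinarith [mul_pos hτ hpos, sq_nonneg (a*η)]
  -- positivity of Δ
  have hΔval : Δ τ η = (2*a*b*η^2)^2 + 4*(a^2*η^2+τ^2)*(2*τ - b^2*η^2) := by
    rw [hΔ, hA, hB, hC]
  refine ⟨by rw [hΔval]; exact hDpos, ?_, ?_, ?_, ?_⟩
  · have E : (fun p : ℝ × ℝ => θ1 p.1 p.2)
        = fun p : ℝ × ℝ => 2*(a^2*p.2^2+p.1^2) /
            Real.sqrt ((2*a*b*p.2^2)^2 + 4*(a^2*p.2^2+p.1^2)*(2*p.1 - b^2*p.2^2)) :=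
      funext fun p => by rw [hθ1, hΔ, hA, hB, hC]
    rw [E]
    have hin : DifferentiableAt ℝ
        (fun p : ℝ × ℝ => (2*a*b*p.2^2)^2 + 4*(a^2*p.2^2+p.1^2)*(2*p.1 - b^2*p.2^2)) (τ, η) := by
      fun_prop
    have hsq : DifferentiableAt ℝ
        (fun p : ℝ × ℝ => Real.sqrt ((2*a*b*p.2^2)^2 + 4*(a^2*p.2^2+p.1^2)*(2*p.1 - b^2*p.2^2)))
        (τ, η) := hin.sqrt hDpos.ne'
    have hne : Real.sqrt ((2*a*b*η^2)^2 + 4*(a^2*η^2+τ^2)*(2*τ - b^2*η^2)) ≠ 0 :=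
      (Real.sqrt_pos.2 hDpos).ne'
    simp only [div_eq_mul_inv]
    exact DifferentiableAt.mul (by fun_prop) (hsq.inv hne)
  · have E : (fun p : ℝ × ℝ => θ2 p.1 p.2)
        = fun p : ℝ × ℝ => (2*a*b*p.2^2) /
            Real.sqrt ((2*a*b*p.2^2)^2 + 4*(a^2*p.2^2+p.1^2)*(2*p.1 - b^2*p.2^2)) :=
      funext fun p => by rw [hθ2, hΔ, hA, hB, hC]
    rw [E]
    have hin : DifferentiableAt ℝ
        (fun p : ℝ × ℝ => (2*a*b*p.2^2)^2 + 4*(a^2*p.2^2+p.1^2)*(2*p.1 - b^2*p.2^2)) (τ, η) := by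
      fun_prop
    have hsq : DifferentiableAt ℝ
        (fun p : ℝ × ℝ => Real.sqrt ((2*a*b*p.2^2)^2 + 4*(a^2*p.2^2+p.1^2)*(2*p.1 - b^2*p.2^2)))
        (τ, η) := hin.sqrt hDpos.ne'
    have hne : Real.sqrt ((2*a*b*η^2)^2 + 4*(a^2*η^2+τ^2)*(2*τ - b^2*η^2)) ≠ 0 :=
      (Real.sqrt_pos.2 hDpos).ne'
    simp only [div_eq_mul_inv]
    exact DifferentiableAt.mul (by fun_prop) (hsq.inv hne)
  · -- the determinant computation
    have E1 : (fun t => θ1 t η) = fun t => 2*(a^2*η^2+t^2) /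
        Real.sqrt ((2*a*b*η^2)^2 + 4*(a^2*η^2+t^2)*(2*t - b^2*η^2)) :=
      funext fun t => by rw [hθ1, hΔ, hA, hB, hC]
    have E2 : (fun e => θ2 τ e) = fun e => (2*a*b*e^2) /
        Real.sqrt ((2*a*b*e^2)^2 + 4*(a^2*e^2+τ^2)*(2*τ - b^2*e^2)) :=
      funext fun e => by rw [hθ2, hΔ, hA, hB, hC]
    have E3 : (fun e => θ1 τ e) = fun e => 2*(a^2*e^2+τ^2) /
        Real.sqrt ((2*a*b*e^2)^2 + 4*(a^2*e^2+τ^2)*(2*τ - b^2*e^2)) :=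
      funext fun e => by rw [hθ1, hΔ, hA, hB, hC]
    have E4 : (fun t => θ2 t η) = fun t => (2*a*b*η^2) /
        Real.sqrt ((2*a*b*η^2)^2 + 4*(a^2*η^2+t^2)*(2*t - b^2*η^2)) :=
      funext fun t => by rw [hθ2, hΔ, hA, hB, hC]
    -- basic HasDerivAt facts
    have h_t2 : HasDerivAt (fun t : ℝ => t^2) (2*τ) τ := by
      simpa using hasDerivAt_pow 2 τ
    have h_e2 : HasDerivAt (fun e : ℝ => e^2) (2*η) η := by
      simpa using hasDerivAt_pow 2 η
    have hA_t : HasDerivAt (fun t : ℝ => a^2*η^2 + t^2) (2*τ) τ := h_t2.const_add _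
    have hlin : HasDerivAt (fun t : ℝ => 2*t - b^2*η^2) (2*1) τ :=
      ((hasDerivAt_id τ).const_mul 2).sub_const _
    have hg_t : HasDerivAt
        (fun t : ℝ => (2*a*b*η^2)^2 + 4*(a^2*η^2+t^2)*(2*t - b^2*η^2))
        ((4*(2*τ))*(2*τ - b^2*η^2) + (4*(a^2*η^2+τ^2))*(2*1)) τ :=
      ((hA_t.const_mul 4).mul hlin).const_add _
    have hf1 : HasDerivAt (fun t : ℝ => 2*(a^2*η^2+t^2)) (2*(2*τ)) τ := hA_t.const_mul 2
    have hf4 : HasDerivAt (fun t : ℝ => 2*a*b*η^2) (0:ℝ) τ := hasDerivAt_const _ _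
    have hAe : HasDerivAt (fun e : ℝ => a^2*e^2 + τ^2) (a^2*(2*η)) η :=
      (h_e2.const_mul (a^2)).add_const _
    have hBe : HasDerivAt (fun e : ℝ => 2*a*b*e^2) (2*a*b*(2*η)) η := h_e2.const_mul (2*a*b)
    have hB2e := hBe.pow 2
    have hLe : HasDerivAt (fun e : ℝ => 2*τ - b^2*e^2) (-(b^2*(2*η))) η :=
      (h_e2.const_mul (b^2)).const_sub _
    have hg_e : HasDerivAt
        (fun e : ℝ => (2*a*b*e^2)^2 + 4*(a^2*e^2+τ^2)*(2*τ - b^2*e^2))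
        ((2:ℕ) * (2*a*b*η^2)^(2-1) * (2*a*b*(2*η))
          + ((4*(a^2*(2*η)))*(2*τ - b^2*η^2) + (4*(a^2*η^2+τ^2))*(-(b^2*(2*η))))) η :=
      hB2e.add ((hAe.const_mul 4).mul hLe)
    have hf3 : HasDerivAt (fun e : ℝ => 2*(a^2*e^2+τ^2)) (2*(a^2*(2*η))) η := hAe.const_mul 2
    -- partial derivatives
    have h1 := (hds_aux _ _ _ _ _ hf1 hg_t hDpos).deriv
    have h2 := (hds_aux _ _ _ _ _ hf3 hg_e hDpos).deriv
    have h3 := (hds_aux _ _ _ _ _ hBe hg_e hDpos).deriv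
    have h4 := (hds_aux _ _ _ _ _ hf4 hg_t hDpos).deriv
    beta_reduce at h1 h2 h3 h4
    rw [E1, E2, E3, E4, h1, h2, h3, h4]
    set s := Real.sqrt ((2*a*b*η^2)^2 + 4*(a^2*η^2+τ^2)*(2*τ - b^2*η^2)) with hsdef
    set Dv := (2*a*b*η^2)^2 + 4*(a^2*η^2+τ^2)*(2*τ - b^2*η^2) with hDdef
    have hspos : 0 < s := Real.sqrt_pos.2 hDpos
    have hss : s * s = Dv := Real.mul_self_sqrt hDpos.le
    rw [div_mul_div_comm, div_mul_div_comm, div_sub_div_same]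
    have hden : (2*Dv*s)*(2*Dv*s) = 4*Dv^2*Dv := by
      linear_combination (4*Dv^2) * hss
    rw [hden, div_eq_div_iff (by positivity) (by positivity)]
    rw [hDdef]
    push_cast
    norm_num
    ring
  · intro habη
    have hnum : 2*a*b*η*(a^2*η^2 + τ^2) ≠ 0 := by
      apply mul_ne_zero _ hApos.ne'
      have : 2*a*b*η = 2*(a*b*η) := by ring
      rw [this]
      exact mul_ne_zero two_ne_zero habη
    exact div_ne_zero hnum (by positivity)
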